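/- arXiv:2602.03897 — 2 statements merged into one kernel-verified Lean document; each statement's English description precedes it below -/
import Mathlib

section
/- For all real v > 0 and τ > 0, the integral from 0 to τ of exp(-t - v²/(4t)) / √(πt) dt equals (1/2)[e^{-v} erfc((v - 2τ)/(2√τ)) - e^{v} erfc((v + 2τ)/(2√τ))]. -/
open Real MeasureTheory

/-- The complementary error function. -/
noncomputable def erfc (z : ℝ) : ℝ := (2 / Real.sqrt π) * ∫ u in Set.Ioi z, Real.exp (-u ^ 2)

section Aux
open Set Filter

lemma integrable_gauss : Integrable (fun u : ℝ => Real.exp (-u ^ 2)) := by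
  have := integrable_exp_neg_mul_sq (b := (1:ℝ)) one_pos
  simpa using this

lemma gauss_total : ∫ u : ℝ, Real.exp (-u ^ 2) = Real.sqrt π := by
  have := integral_gaussian (1 : ℝ)
  simpa using this

lemma gauss_split (z : ℝ) :
    (∫ u in Set.Iic z, Real.exp (-u ^ 2)) + ∫ u in Set.Ioi z, Real.exp (-u ^ 2)
      = Real.sqrt π := by
  rw [intervalIntegral.integral_Iic_add_Ioi integrable_gauss.integrableOn
    integrable_gauss.integrableOn, gauss_total]

lemma erfc_eq (z : ℝ) :
    erfc z = 2 - (2 / Real.sqrt π) * (∫ u in Set.Iic (0:ℝ), Real.exp (-u ^ 2))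
      - (2 / Real.sqrt π) * ∫ u in (0:ℝ)..z, Real.exp (-u ^ 2) := by
  have h1 := gauss_split z
  have h2 : (∫ u in Set.Iic z, Real.exp (-u ^ 2)) - ∫ u in Set.Iic (0:ℝ), Real.exp (-u ^ 2)
      = ∫ u in (0:ℝ)..z, Real.exp (-u ^ 2) :=
    intervalIntegral.integral_Iic_sub_Iic integrable_gauss.integrableOn
      integrable_gauss.integrableOn
  have hπ : Real.sqrt π ≠ 0 := by positivity
  rw [erfc]
  field_simp
  nlinarith [h1, h2]

lemma erfc_hasDerivAt (z : ℝ) :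
    HasDerivAt erfc (-(2 / Real.sqrt π) * Real.exp (-z ^ 2)) z := by
  have hc : Continuous fun u : ℝ => Real.exp (-u ^ 2) := by fun_prop
  have hint : HasDerivAt (fun z => ∫ u in (0:ℝ)..z, Real.exp (-u ^ 2))
      (Real.exp (-z ^ 2)) z :=
    intervalIntegral.integral_hasDerivAt_right
      integrable_gauss.intervalIntegrable
      hc.stronglyMeasurable.stronglyMeasurableAtFilter hc.continuousAt
  have : HasDerivAt (fun z => 2 - (2 / Real.sqrt π) * (∫ u in Set.Iic (0:ℝ), Real.exp (-u ^ 2))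
      - (2 / Real.sqrt π) * ∫ u in (0:ℝ)..z, Real.exp (-u ^ 2))
      (-(2 / Real.sqrt π) * Real.exp (-z ^ 2)) z := by
    simpa [neg_mul] using ((hint.const_mul ((2:ℝ) / Real.sqrt π)).const_sub _)
  exact this.congr_of_eventuallyEq (by filter_upwards with x; rw [erfc_eq])

lemma erfc_neg (z : ℝ) : erfc (-z) = 2 - erfc z := by
  have h0 : (∫ u in Set.Ioi (-z), Real.exp (-u ^ 2))
      = ∫ u in Set.Iic z, Real.exp (-u ^ 2) := by
    rw [← integral_comp_neg_Iic]
    simp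
  have h1 := gauss_split z
  have hπ : Real.sqrt π ≠ 0 := by positivity
  rw [erfc, erfc, h0]
  field_simp
  nlinarith [h1]

lemma erfc_tendsto_atTop : Tendsto erfc atTop (nhds 0) := by
  have h : Tendsto (fun z : ℝ => ∫ u in Set.Ioi z, Real.exp (-u ^ 2)) atTop (nhds 0) := by
    have h2 := tendsto_setIntegral_of_antitone (μ := volume)
      (f := fun u : ℝ => Real.exp (-u ^ 2)) (s := fun z : ℝ => Set.Ioi z)
      (fun i => measurableSet_Ioi) (fun i j hij => Set.Ioi_subset_Ioi hij)
      ⟨0, integrable_gauss.integrableOn⟩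
    have he : ⋂ z : ℝ, Set.Ioi z = (∅ : Set ℝ) := by
      ext x
      simp only [Set.mem_iInter, Set.mem_Ioi, Set.mem_empty_iff_false, iff_false, not_forall,
        not_lt]
      exact ⟨x, le_rfl⟩
    rwa [he, Measure.restrict_empty, integral_zero_measure] at h2
  have := h.const_mul ((2:ℝ) / Real.sqrt π)
  rw [mul_zero] at this
  exact this

lemma erfc_tendsto_atBot : Tendsto erfc atBot (nhds 2) := by
  have : Tendsto (fun z : ℝ => 2 - erfc (-z)) atBot (nhds (2 - 0)) :=
    (tendsto_const_nhds.sub (erfc_tendsto_atTop.comp tendsto_neg_atBot_atTop))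
  simp only [sub_zero] at this
  refine this.congr fun z => ?_
  rw [erfc_neg, sub_sub_cancel]

lemma hasDerivAt_H (v : ℝ) {t : ℝ} (ht : 0 < t) :
    HasDerivAt (fun t => -(1/2)*(Real.exp (-v) * erfc (Real.sqrt t - v/(2*Real.sqrt t))
        + Real.exp v * erfc (Real.sqrt t + v/(2*Real.sqrt t))))
      (Real.exp (-t - v^2/(4*t)) / Real.sqrt (π * t)) t := by
  have hst : 0 < Real.sqrt t := Real.sqrt_pos.mpr ht
  have hts : Real.sqrt t ^ 2 = t := Real.sq_sqrt ht.le
  have hsq : HasDerivAt Real.sqrt (1/(2*Real.sqrt t)) t := Real.hasDerivAt_sqrt ht.ne'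
  have h2s : HasDerivAt (fun t => 2 * Real.sqrt t) (2 * (1/(2*Real.sqrt t))) t :=
    hsq.const_mul 2
  have hinv : HasDerivAt (fun t => v / (2 * Real.sqrt t))
      (v * (-(2 * (1/(2*Real.sqrt t))) / (2*Real.sqrt t)^2)) t := by
    simpa [div_eq_mul_inv] using (h2s.inv (by positivity)).const_mul v
  have hg : HasDerivAt (fun t => Real.sqrt t - v/(2*Real.sqrt t))
      (1/(2*Real.sqrt t) - v * (-(2 * (1/(2*Real.sqrt t))) / (2*Real.sqrt t)^2)) t :=
    hsq.sub hinv
  have hh : HasDerivAt (fun t => Real.sqrt t + v/(2*Real.sqrt t))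
      (1/(2*Real.sqrt t) + v * (-(2 * (1/(2*Real.sqrt t))) / (2*Real.sqrt t)^2)) t :=
    hsq.add hinv
  have hG := ((erfc_hasDerivAt _).comp t hg).const_mul (Real.exp (-v))
  have hH := ((erfc_hasDerivAt _).comp t hh).const_mul (Real.exp v)
  have hsum := ((hG.add hH).const_mul (-(1/2) : ℝ))
  refine hsum.congr_deriv (Eq.symm ?_)
  -- now prove derivative values equal
  have e1 : (Real.sqrt t - v/(2*Real.sqrt t))^2 = t - v + v^2/(4*t) := by
    field_simp
    linear_combination (16*t*Real.sqrt t^2 - 4*v^2) * hts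
  have e2 : (Real.sqrt t + v/(2*Real.sqrt t))^2 = t + v + v^2/(4*t) := by
    field_simp
    linear_combination (16*t*Real.sqrt t^2 - 4*v^2) * hts
  have E1 : Real.exp (-v) * Real.exp (-(Real.sqrt t - v/(2*Real.sqrt t))^2)
      = Real.exp (-t - v^2/(4*t)) := by
    rw [e1, ← Real.exp_add]; ring_nf
  have E2 : Real.exp v * Real.exp (-(Real.sqrt t + v/(2*Real.sqrt t))^2)
      = Real.exp (-t - v^2/(4*t)) := by
    rw [e2, ← Real.exp_add]; ring_nf
  have hπt : Real.sqrt (π * t) = Real.sqrt π * Real.sqrt t := Real.sqrt_mul pi_pos.le t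
  have hπ : (0:ℝ) < Real.sqrt π := Real.sqrt_pos.mpr pi_pos
  have hev : Real.exp (-v) = (Real.exp v)⁻¹ := Real.exp_neg v
  have A' : Real.exp (-(Real.sqrt t - v/(2*Real.sqrt t))^2)
      = Real.exp v * Real.exp (-t - v^2/(4*t)) := by
    rw [← E1, ← mul_assoc, ← Real.exp_add]; simp
  have B' : Real.exp (-(Real.sqrt t + v/(2*Real.sqrt t))^2)
      = (Real.exp v)⁻¹ * Real.exp (-t - v^2/(4*t)) := by
    rw [← E2, ← mul_assoc, inv_mul_cancel₀ (Real.exp_ne_zero v), one_mul]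
  rw [hπt, A', B', hev]
  field_simp
  ring
  -- linear_combination (1/Real.sqrt π) * (1/(2*Real.sqrt t) - v * (-(2 * (1/(2*Real.sqrt t))) / (2*Real.sqrt t)^2)) * E1 + (1/Real.sqrt π) * (1/(2*Real.sqrt t) + v * (-(2 * (1/(2*Real.sqrt t))) / (2*Real.sqrt t)^2)) * E2

lemma integrableOn_f (v τ : ℝ) (hτ : 0 < τ) :
    IntegrableOn (fun t => Real.exp (-t - v^2/(4*t)) / Real.sqrt (π*t)) (Set.Ioc 0 τ) := by
  have hcont : ContinuousOn (fun t => Real.exp (-t - v^2/(4*t)) / Real.sqrt (π*t))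
      (Set.Ioc 0 τ) := by
    apply ContinuousOn.div
    · apply Real.continuous_exp.comp_continuousOn
      apply ContinuousOn.sub (continuous_neg.continuousOn)
      exact continuousOn_const.div (by fun_prop) fun t ht => by have := ht.1; positivity
    · fun_prop
    · intro t ht
      have : (0:ℝ) < π * t := by have := ht.1; positivity
      positivity
  have hmaj : IntegrableOn (fun t : ℝ => (Real.sqrt π)⁻¹ * t ^ (-(1/2) : ℝ)) (Set.Ioc 0 τ) := by
    have h := intervalIntegral.intervalIntegrable_rpow' (a := 0) (b := τ)
      (r := (-(1/2) : ℝ)) (by norm_num)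
    rw [intervalIntegrable_iff_integrableOn_Ioc_of_le hτ.le] at h
    exact h.const_mul _
  refine Integrable.mono hmaj (hcont.aestronglyMeasurable measurableSet_Ioc) ?_
  filter_upwards [ae_restrict_mem measurableSet_Ioc] with t ht
  have ht0 : (0:ℝ) < t := ht.1
  have h1 : Real.exp (-t - v^2/(4*t)) ≤ 1 := by
    rw [Real.exp_le_one_iff]
    have : (0:ℝ) ≤ v^2/(4*t) := by positivity
    linarith
  have h2 : Real.sqrt (π*t) = Real.sqrt π * Real.sqrt t := Real.sqrt_mul pi_pos.le t
  have h3 : t ^ (-(1/2) : ℝ) = (Real.sqrt t)⁻¹ := by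
    rw [Real.rpow_neg ht0.le, Real.sqrt_eq_rpow]
  have hst : 0 < Real.sqrt t := Real.sqrt_pos.mpr ht0
  have hπ : (0:ℝ) < Real.sqrt π := Real.sqrt_pos.mpr pi_pos
  rw [Real.norm_eq_abs, Real.norm_eq_abs, abs_of_nonneg (by positivity),
    abs_of_nonneg (by positivity), h2, h3]
  rw [div_le_iff₀ (by positivity)]
  calc Real.exp (-t - v^2/(4*t)) ≤ 1 := h1
    _ = (Real.sqrt π)⁻¹ * (Real.sqrt t)⁻¹ * (Real.sqrt π * Real.sqrt t) := by
        field_simp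
  

end Aux

open Set Filter in
theorem stmt_0 (v τ : ℝ) (hv : 0 < v) (hτ : 0 < τ) :
    ∫ t in Set.Ioc (0 : ℝ) τ, Real.exp (-t - v ^ 2 / (4 * t)) / Real.sqrt (π * t) =
      (1 / 2) * (Real.exp (-v) * erfc ((v - 2 * τ) / (2 * Real.sqrt τ)) -
        Real.exp v * erfc ((v + 2 * τ) / (2 * Real.sqrt τ))) := by
  set f : ℝ → ℝ := fun t => Real.exp (-t - v^2/(4*t)) / Real.sqrt (π*t) with hf
  set H : ℝ → ℝ := fun t => -(1/2)*(Real.exp (-v) * erfc (Real.sqrt t - v/(2*Real.sqrt t))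
        + Real.exp v * erfc (Real.sqrt t + v/(2*Real.sqrt t))) with hH
  set l : Filter ℝ := nhdsWithin 0 (Set.Ioi 0) with hl
  have hfi := integrableOn_f v τ hτ
  -- limit of set integrals
  have h1 : Tendsto (fun ε => ∫ t in Set.Ioc ε τ, f t ∂(volume.restrict (Set.Ioc 0 τ))) l
      (nhds (∫ t in Set.Ioc (0:ℝ) τ, f t)) := by
    have aec : AECover (volume.restrict (Set.Ioc (0:ℝ) τ)) l fun ε => Set.Ioc ε τ :=
      MeasureTheory.aecover_Ioc_of_Ioc (tendsto_id.mono_left nhdsWithin_le_nhds)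
        tendsto_const_nhds
    exact aec.integral_tendsto_of_countably_generated hfi
  -- FTC identity, eventually in l
  have h2 : ∀ᶠ ε in l, ∫ t in Set.Ioc ε τ, f t ∂(volume.restrict (Set.Ioc 0 τ))
      = H τ - H ε := by
    filter_upwards [Ioo_mem_nhdsGT_of_mem (Set.left_mem_Ico.mpr hτ)] with ε hε
    have hε0 : 0 < ε := hε.1
    have hετ : ε < τ := hε.2
    have hr : ∫ t in Set.Ioc ε τ, f t ∂(volume.restrict (Set.Ioc 0 τ))
        = ∫ t in Set.Ioc ε τ, f t := by
      rw [Measure.restrict_restrict measurableSet_Ioc,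
        Set.inter_eq_left.mpr (Set.Ioc_subset_Ioc_left hε0.le)]
    have hint : IntervalIntegrable f volume ε τ :=
      (intervalIntegrable_iff_integrableOn_Ioc_of_le hετ.le).mpr
        (hfi.mono_set (Set.Ioc_subset_Ioc_left hε0.le))
    rw [hr, ← intervalIntegral.integral_of_le hετ.le]
    refine intervalIntegral.integral_eq_sub_of_hasDerivAt (fun t ht => ?_) hint
    rw [Set.uIcc_of_le hετ.le] at ht
    exact hasDerivAt_H v (lt_of_lt_of_le hε0 ht.1)
  -- limit of H ε
  have hsqrt0 : Tendsto (fun ε : ℝ => Real.sqrt ε) l (nhds 0) := by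
    have := (Real.continuous_sqrt.tendsto 0).mono_left (nhdsWithin_le_nhds (s := Set.Ioi 0))
    simpa using this
  have hdivTop : Tendsto (fun ε : ℝ => v/(2*Real.sqrt ε)) l atTop := by
    have h2s : Tendsto (fun ε : ℝ => 2*Real.sqrt ε) l (nhdsWithin 0 (Set.Ioi 0)) := by
      rw [tendsto_nhdsWithin_iff]
      constructor
      · simpa using hsqrt0.const_mul 2
      · filter_upwards [self_mem_nhdsWithin] with ε (hε : ε ∈ Set.Ioi 0)
        have : 0 < Real.sqrt ε := Real.sqrt_pos.mpr hε
        exact Set.mem_Ioi.mpr (by positivity)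
    have := (tendsto_inv_nhdsGT_zero.comp h2s).const_mul_atTop hv
    simpa [div_eq_mul_inv] using this
  have hgBot : Tendsto (fun ε : ℝ => Real.sqrt ε - v/(2*Real.sqrt ε)) l atBot := by
    simp only [sub_eq_add_neg]
    refine tendsto_atBot_add_left_of_ge' l 1 ?_ (tendsto_neg_atTop_atBot.comp hdivTop)
    filter_upwards [Ioo_mem_nhdsGT_of_mem (Set.left_mem_Ico.mpr one_pos)] with ε hε
    calc Real.sqrt ε ≤ Real.sqrt 1 := Real.sqrt_le_sqrt hε.2.le
      _ = 1 := Real.sqrt_one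
  have hhTop : Tendsto (fun ε : ℝ => Real.sqrt ε + v/(2*Real.sqrt ε)) l atTop :=
    tendsto_atTop_add_left_of_le l 0 (fun ε => Real.sqrt_nonneg ε) hdivTop
  have h3 : Tendsto (fun ε => H τ - H ε) l
      (nhds (H τ - (-(1/2)*(Real.exp (-v) * 2 + Real.exp v * 0)))) := by
    apply tendsto_const_nhds.sub
    apply Tendsto.const_mul
    exact ((erfc_tendsto_atBot.comp hgBot).const_mul _).add
      ((erfc_tendsto_atTop.comp hhTop).const_mul _)
  have hlne : l.NeBot := by rw [hl]; infer_instance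
  have key : ∫ t in Set.Ioc (0:ℝ) τ, f t
      = H τ - (-(1/2)*(Real.exp (-v) * 2 + Real.exp v * 0)) :=
    tendsto_nhds_unique (h1.congr' h2) h3
  -- final algebra
  have hsτ : 0 < Real.sqrt τ := Real.sqrt_pos.mpr hτ
  have hts : Real.sqrt τ ^ 2 = τ := Real.sq_sqrt hτ.le
  have ha : (v - 2*τ)/(2*Real.sqrt τ) = -(Real.sqrt τ - v/(2*Real.sqrt τ)) := by
    field_simp
    linarith [hts]
  have hb : (v + 2*τ)/(2*Real.sqrt τ) = Real.sqrt τ + v/(2*Real.sqrt τ) := by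
    field_simp
    linarith [hts]
  rw [show (v - 2 * τ) = v - 2*τ by ring, ha, erfc_neg, hb] at *
  rw [key, hH]
  ring
end

section
/- For every ξ ≥ 0, the limit as τ → 0⁺ of f(ξ,τ) := (1/√(πτ)) ∫_ξ^∞ exp(-v²/(4τ)) · ₀F̄₁(;1; ξ(v-ξ)) dv is 0, provided ξ > 0. -/
open Real MeasureTheory Filter Set

/-- The regularized confluent hypergeometric limit function ₀F̄₁(;1;x) = ∑ xᵏ/(k!)². -/
noncomputable def F01reg (x : ℝ) : ℝ := ∑' k : ℕ, x ^ k / (k.factorial : ℝ) ^ 2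

lemma F01reg_nonneg {x : ℝ} (hx : 0 ≤ x) : 0 ≤ F01reg x :=
  tsum_nonneg fun k => div_nonneg (pow_nonneg hx k) (by positivity)

lemma F01reg_le_exp {x : ℝ} (hx : 0 ≤ x) : F01reg x ≤ Real.exp x := by
  have hsum : Summable (fun k : ℕ => x ^ k / (k.factorial : ℝ)) :=
    Real.summable_pow_div_factorial x
  have hterm : ∀ k : ℕ, x ^ k / (k.factorial : ℝ) ^ 2 ≤ x ^ k / (k.factorial : ℝ) := by
    intro k
    have h1 : (1 : ℝ) ≤ (k.factorial : ℝ) := Nat.one_le_cast.mpr k.factorial_pos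
    gcongr
    · calc (k.factorial : ℝ) = k.factorial * 1 := by ring
        _ ≤ k.factorial * k.factorial := by nlinarith
        _ = (k.factorial : ℝ) ^ 2 := by ring
  have hsum2 : Summable (fun k : ℕ => x ^ k / (k.factorial : ℝ) ^ 2) :=
    Summable.of_nonneg_of_le (fun k => div_nonneg (pow_nonneg hx k) (by positivity)) hterm hsum
  have hexp : Real.exp x = ∑' k : ℕ, x ^ k / (k.factorial : ℝ) := by
    rw [Real.exp_eq_exp_ℝ, NormedSpace.exp_eq_tsum_div]
  rw [hexp, F01reg]
  exact Summable.tsum_le_tsum hterm hsum2 hsum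

lemma key_bound (ξ : ℝ) (hξ : 0 < ξ) (τ : ℝ) (hτ : 0 < τ) :
    (1 / Real.sqrt (π * τ)) *
        ∫ v in Set.Ioi ξ, Real.exp (-v ^ 2 / (4 * τ)) * F01reg (ξ * (v - ξ)) ≤
      Real.sqrt 8 * Real.exp (2*τ*ξ^2 - ξ^2 - ξ^2/(8*τ)) := by
  set b : ℝ := (8*τ)⁻¹ with hb
  have hbpos : 0 < b := by positivity
  set c : ℝ := Real.exp (2*τ*ξ^2 - ξ^2 - ξ^2/(8*τ)) with hc
  set G : ℝ → ℝ := fun v => c * Real.exp (-b * (v - 4*τ*ξ)^2) with hG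
  have hGint : Integrable G :=
    ((integrable_exp_neg_mul_sq hbpos).comp_sub_right (4*τ*ξ)).const_mul c
  have hGnn : ∀ v, 0 ≤ G v := fun v => mul_nonneg (Real.exp_nonneg _) (Real.exp_nonneg _)
  have h1 : ∀ v ∈ Set.Ioi ξ,
      Real.exp (-v ^ 2 / (4 * τ)) * F01reg (ξ * (v - ξ)) ≤ G v := by
    intro v hv
    have hv' : ξ < v := hv
    have hx : 0 ≤ ξ * (v - ξ) := mul_nonneg hξ.le (by linarith)
    calc Real.exp (-v ^ 2 / (4 * τ)) * F01reg (ξ * (v - ξ))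
        ≤ Real.exp (-v ^ 2 / (4 * τ)) * Real.exp (ξ * (v - ξ)) :=
          mul_le_mul_of_nonneg_left (F01reg_le_exp hx) (Real.exp_nonneg _)
      _ = Real.exp (-v ^ 2 / (4 * τ) + ξ * (v - ξ)) := (Real.exp_add _ _).symm
      _ ≤ G v := by
          rw [hG]
          simp only
          rw [hc, ← Real.exp_add]
          apply Real.exp_le_exp.mpr
          have hkey : (2*τ*ξ^2 - ξ^2 - ξ^2/(8*τ) + (-b * (v - 4*τ*ξ)^2))
              - (-v ^ 2 / (4 * τ) + ξ * (v - ξ)) = (v^2 - ξ^2)/(8*τ) := by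
            rw [hb]
            field_simp
            ring
          have hsq : ξ^2 ≤ v^2 := by nlinarith
          have : 0 ≤ (v^2 - ξ^2)/(8*τ) := div_nonneg (by linarith) (by positivity)
          linarith
  have h2 : (∫ v in Set.Ioi ξ, Real.exp (-v ^ 2 / (4 * τ)) * F01reg (ξ * (v - ξ))) ≤
      ∫ v in Set.Ioi ξ, G v := by
    apply integral_mono_of_nonneg
    · rw [EventuallyLE, ae_restrict_iff' measurableSet_Ioi]
      refine ae_of_all _ fun v hv => ?_
      have hx : 0 ≤ ξ * (v - ξ) := mul_nonneg hξ.le (by simp at hv; linarith)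
      exact mul_nonneg (Real.exp_nonneg _) (F01reg_nonneg hx)
    · exact hGint.integrableOn
    · rw [EventuallyLE, ae_restrict_iff' measurableSet_Ioi]
      exact ae_of_all _ h1
  have h3 : (∫ v in Set.Ioi ξ, G v) ≤ ∫ v : ℝ, G v :=
    setIntegral_le_integral hGint (ae_of_all _ hGnn)
  have h4 : (∫ v : ℝ, G v) = c * (Real.sqrt 8 * Real.sqrt (π * τ)) := by
    rw [hG]
    rw [MeasureTheory.integral_const_mul c (fun v => Real.exp (-b * (v - 4*τ*ξ)^2))]
    rw [integral_sub_right_eq_self (fun v => Real.exp (-b * v^2)) (4*τ*ξ)]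
    rw [integral_gaussian b]
    congr 1
    rw [hb, ← Real.sqrt_mul (by norm_num : (0:ℝ) ≤ 8)]
    congr 1
    field_simp
  have hs : 0 < Real.sqrt (π * τ) := Real.sqrt_pos.mpr (by positivity)
  calc (1 / Real.sqrt (π * τ)) *
        ∫ v in Set.Ioi ξ, Real.exp (-v ^ 2 / (4 * τ)) * F01reg (ξ * (v - ξ))
      ≤ (1 / Real.sqrt (π * τ)) * (c * (Real.sqrt 8 * Real.sqrt (π * τ))) := by
        apply mul_le_mul_of_nonneg_left _ (by positivity)
        rw [← h4]; exact h2.trans h3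
    _ = Real.sqrt 8 * c := by field_simp
    _ = Real.sqrt 8 * Real.exp (2*τ*ξ^2 - ξ^2 - ξ^2/(8*τ)) := by rw [hc]

theorem stmt_3 (ξ : ℝ) (hξ : 0 < ξ) :
    Filter.Tendsto
      (fun τ : ℝ =>
        (1 / Real.sqrt (π * τ)) *
          ∫ v in Set.Ioi ξ, Real.exp (-v ^ 2 / (4 * τ)) * F01reg (ξ * (v - ξ)))
      (nhdsWithin 0 (Set.Ioi 0)) (nhds 0) := by
  have hbound : Tendsto (fun τ : ℝ => Real.sqrt 8 * Real.exp (2*τ*ξ^2 - ξ^2 - ξ^2/(8*τ)))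
      (nhdsWithin 0 (Set.Ioi 0)) (nhds 0) := by
    have h8 : Tendsto (fun τ : ℝ => 8*τ) (nhdsWithin 0 (Set.Ioi 0)) (nhdsWithin 0 (Set.Ioi 0)) := by
      apply tendsto_nhdsWithin_of_tendsto_nhds_of_eventually_within _
      · have h : Tendsto (fun τ : ℝ => 8*τ) (nhds 0) (nhds (8*0)) :=
          (continuous_const.mul continuous_id).tendsto 0
        simpa using h.mono_left nhdsWithin_le_nhds
      · filter_upwards [self_mem_nhdsWithin] with x hx
        simp only [Set.mem_Ioi] at hx ⊢
        linarith
    have hinv : Tendsto (fun τ : ℝ => (8*τ)⁻¹) (nhdsWithin 0 (Set.Ioi 0)) atTop :=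
      tendsto_inv_nhdsGT_zero.comp h8
    have hdiv : Tendsto (fun τ : ℝ => ξ^2/(8*τ)) (nhdsWithin 0 (Set.Ioi 0)) atTop := by
      simp only [div_eq_mul_inv]
      exact hinv.const_mul_atTop (by positivity)
    have hlin : Tendsto (fun τ : ℝ => 2*τ*ξ^2 - ξ^2) (nhdsWithin 0 (Set.Ioi 0))
        (nhds (2*0*ξ^2 - ξ^2)) := by
      apply Tendsto.mono_left _ nhdsWithin_le_nhds
      exact (((continuous_const.mul continuous_id).mul continuous_const).sub
        continuous_const).tendsto 0
    have hexp : Tendsto (fun τ : ℝ => 2*τ*ξ^2 - ξ^2 - ξ^2/(8*τ))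
        (nhdsWithin 0 (Set.Ioi 0)) atBot := by
      have := hlin.add_atBot (tendsto_neg_atBot_iff.mpr hdiv)
      simpa [sub_eq_add_neg] using this
    have := (Real.tendsto_exp_atBot).comp hexp
    have h := this.const_mul (Real.sqrt 8)
    simpa using h
  apply squeeze_zero'
  · filter_upwards [self_mem_nhdsWithin] with τ hτ
    simp only [Set.mem_Ioi] at hτ
    apply mul_nonneg (by positivity)
    apply setIntegral_nonneg measurableSet_Ioi
    intro v hv
    simp only [Set.mem_Ioi] at hv
    exact mul_nonneg (Real.exp_nonneg _) (F01reg_nonneg (mul_nonneg hξ.le (by linarith)))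
  · filter_upwards [self_mem_nhdsWithin] with τ hτ
    exact key_bound ξ hξ τ hτ
  · exact hbound
end
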